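/- If A ~ B in a unital C*-algebra, A is normal, and f : ℂ → ℂ is continuous, then f(A) ~ f(B), where f(A) and f(B) are defined via continuous functional calculus (B being normal with the same spectrum as A). -/

import Mathlib

open Filter

/-- Approximate unitary equivalence in a unital C*-algebra. -/
def ApproxUnitaryEquiv {A : Type*} [CStarAlgebra A] (a b : A) : Prop :=
  ∃ U : ℕ → unitary A,
    Tendsto (fun n => ‖(U n : A) * a * star (U n : A) - b‖) atTop (nhds 0)

/-- Conjugation by a unitary as a star algebra homomorphism. -/
noncomputable def unitaryConjHom {A : Type*} [CStarAlgebra A] (u : unitary A) :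
    A →⋆ₐ[ℂ] A where
  toFun z := (u : A) * z * star (u : A)
  map_one' := by simp [Unitary.coe_mul_star_self]
  map_mul' z w := by
    have h : star (u : A) * (u : A) = 1 := Unitary.coe_star_mul_self u
    show (u : A) * (z * w) * star (u : A) =
      ((u : A) * z * star (u : A)) * ((u : A) * w * star (u : A))
    simp only [mul_assoc]
    rw [← mul_assoc (star (u : A)) (u : A), h, one_mul]
  map_zero' := by simp
  map_add' z w := by
    show (u : A) * (z + w) * star (u : A) = _
    rw [mul_add, add_mul]
  commutes' r := by
    simp [Algebra.algebraMap_eq_smul_one, mul_smul_comm, smul_mul_assoc,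
      Unitary.coe_mul_star_self]
  map_star' z := by simp [star_mul, mul_assoc]

theorem approxUnitaryEquiv_cfc {A : Type*} [CStarAlgebra A]
    {a b : A} (h : ApproxUnitaryEquiv a b) (ha : IsStarNormal a)
    (f : ℂ → ℂ) (hf : Continuous f) :
    ApproxUnitaryEquiv (cfc f a) (cfc f b) := by
  obtain ⟨U, hU⟩ := h
  rcases subsingleton_or_nontrivial A with hA | hA
  · refine ⟨U, ?_⟩
    have hz : ∀ n : ℕ, ‖(U n : A) * cfc f a * star (U n : A) - cfc f b‖ = 0 := fun n => by
      rw [Subsingleton.elim ((U n : A) * cfc f a * star (U n : A) - cfc f b) (0 : A), norm_zero]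
    simp only [hz]
    exact tendsto_const_nhds
  set x : ℕ → A := fun n => (U n : A) * a * star (U n : A) with hx
  have hxb : Tendsto x atTop (nhds b) := by
    rw [tendsto_iff_norm_sub_tendsto_zero]; exact hU
  have hxnormal : ∀ n, IsStarNormal (x n) := fun n =>
    IsStarNormal.map (unitaryConjHom (U n)) a
  have hbnormal : IsStarNormal b := by
    constructor
    have h1 : Tendsto (fun n => star (x n) * x n) atTop (nhds (star b * b)) :=
      (hxb.star).mul hxb
    have h2 : Tendsto (fun n => x n * star (x n)) atTop (nhds (b * star b)) :=
      hxb.mul hxb.star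
    have heq : (fun n => star (x n) * x n) = fun n => x n * star (x n) := by
      funext n; exact (hxnormal n).star_comm_self
    rw [heq] at h1
    exact tendsto_nhds_unique h1 h2
  -- the compact set containing all spectra
  set R : ℝ := max ‖a‖ ‖b‖ with hR
  set K : Set ℂ := Metric.closedBall 0 R with hK
  have hKcompact : CompactSpace K :=
    isCompact_iff_compactSpace.mp (isCompact_closedBall 0 R)
  have hnormx : ∀ n, ‖x n‖ = ‖a‖ := by
    intro n
    have h1 : star ((U n : A)) = ((star (U n) : unitary A) : A) := rfl
    rw [hx]
    simp only [h1]
    rw [CStarRing.norm_mul_coe_unitary, CStarRing.norm_coe_unitary_mul]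
  have hsx : ∀ n, spectrum ℂ (x n) ⊆ K := fun n =>
    (spectrum.subset_closedBall_norm (x n)).trans
      (Metric.closedBall_subset_closedBall (by rw [hnormx n]; exact le_max_left _ _))
  have hsb : spectrum ℂ b ⊆ K :=
    (spectrum.subset_closedBall_norm b).trans
      (Metric.closedBall_subset_closedBall (le_max_right _ _))
  -- the star algebra homomorphism C(K, ℂ) →⋆ₐ A for a normal element with spectrum in K
  let Ψ : ∀ (y : A), IsStarNormal y → spectrum ℂ y ⊆ K → (C(K, ℂ) →⋆ₐ[ℂ] A) :=
    fun y hy hs => (cfcHom hy (R := ℂ)).comp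
      (ContinuousMap.compStarAlgHom' ℂ ℂ ⟨Set.inclusion hs, continuous_id.subtype_map hs⟩)
  have hΨnorm : ∀ (y : A) (hy : IsStarNormal y) (hs : spectrum ℂ y ⊆ K) (g : C(K, ℂ)),
      ‖Ψ y hy hs g‖ ≤ ‖g‖ := by
    intro y hy hs g
    rw [show Ψ y hy hs g = cfcHom hy (R := ℂ)
      (g.comp ⟨Set.inclusion hs, continuous_id.subtype_map hs⟩) from rfl, norm_cfcHom y _ hy]
    exact ContinuousMap.norm_le _ (norm_nonneg g) |>.mpr fun z =>
      ContinuousMap.norm_coe_le_norm g _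
  -- the key predicate
  set p : C(K, ℂ) → Prop := fun g =>
    Tendsto (fun n => Ψ (x n) (hxnormal n) (hsx n) g) atTop
      (nhds (Ψ b hbnormal hsb g)) with hp
  have hΨid : ∀ (y : A) (hy : IsStarNormal y) (hs : spectrum ℂ y ⊆ K),
      Ψ y hy hs (ContinuousMap.restrict K (ContinuousMap.id ℂ)) = y := by
    intro y hy hs
    have : (ContinuousMap.restrict K (ContinuousMap.id ℂ)).comp
        (⟨Set.inclusion hs, continuous_id.subtype_map hs⟩ : C(spectrum ℂ y, K)) =
        (ContinuousMap.id ℂ).restrict (spectrum ℂ y) := by ext z; rfl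
    show cfcHom hy (R := ℂ) _ = y
    convert cfcHom_id hy using 2
    exact this
  have hmain : ∀ g : C(K, ℂ), p g := by
    intro g
    induction g using ContinuousMap.induction_on_of_compact with
    | const r =>
      have : ∀ (y : A) (hy : IsStarNormal y) (hs : spectrum ℂ y ⊆ K),
          Ψ y hy hs (ContinuousMap.const K r) = algebraMap ℂ A r := by
        intro y hy hs
        have : (ContinuousMap.const K r) = algebraMap ℂ C(K, ℂ) r := by ext z; rfl
        rw [this, AlgHomClass.commutes]
      rw [hp]
      simp only [this]
      exact tendsto_const_nhds
    | id =>
      rw [hp]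
      simp only [hΨid]
      exact hxb
    | star_id =>
      rw [hp]
      simp only [map_star, hΨid]
      exact hxb.star
    | add g₁ g₂ h₁ h₂ =>
      rw [hp]; simp only [map_add]
      exact h₁.add h₂
    | mul g₁ g₂ h₁ h₂ =>
      rw [hp]; simp only [map_mul]
      exact h₁.mul h₂
    | frequently g hg =>
      show Tendsto (fun n => Ψ (x n) (hxnormal n) (hsx n) g) atTop (nhds (Ψ b hbnormal hsb g))
      rw [Metric.tendsto_atTop]
      intro ε hε
      have hball : Metric.ball g (ε / 3) ∈ nhds g := Metric.ball_mem_nhds g (by linarith)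
      obtain ⟨g', hg'p, hg'ball⟩ := (hg.and_eventually hball).exists
      replace hg'p : Tendsto (fun n => Ψ (x n) (hxnormal n) (hsx n) g') atTop
        (nhds (Ψ b hbnormal hsb g')) := hg'p
      rw [Metric.tendsto_atTop] at hg'p
      obtain ⟨N, hN⟩ := hg'p (ε / 3) (by linarith)
      refine ⟨N, fun n hn => ?_⟩
      have h1 : dist (Ψ (x n) (hxnormal n) (hsx n) g) (Ψ (x n) (hxnormal n) (hsx n) g') ≤
          ‖g - g'‖ := by
        rw [dist_eq_norm, ← map_sub]
        exact hΨnorm _ _ _ _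
      have h2 : dist (Ψ b hbnormal hsb g') (Ψ b hbnormal hsb g) ≤ ‖g' - g‖ := by
        rw [dist_eq_norm, ← map_sub]
        exact hΨnorm _ _ _ _
      have hgg' : ‖g - g'‖ < ε / 3 := by
        rw [← dist_eq_norm, dist_comm]
        exact Metric.mem_ball.mp hg'ball
      have hg'g : ‖g' - g‖ < ε / 3 := by
        rw [← dist_eq_norm]
        exact Metric.mem_ball.mp hg'ball
      calc dist (Ψ (x n) (hxnormal n) (hsx n) g) (Ψ b hbnormal hsb g)
          ≤ dist (Ψ (x n) (hxnormal n) (hsx n) g) (Ψ (x n) (hxnormal n) (hsx n) g') +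
            dist (Ψ (x n) (hxnormal n) (hsx n) g') (Ψ b hbnormal hsb g') +
            dist (Ψ b hbnormal hsb g') (Ψ b hbnormal hsb g) := dist_triangle4 _ _ _ _
        _ < ε / 3 + ε / 3 + ε / 3 := by
            exact add_lt_add (add_lt_add_of_le_of_lt (lt_of_le_of_lt h1 hgg').le
              (hN n hn)) (lt_of_le_of_lt h2 hg'g)
        _ = ε := by ring
  -- now apply to f
  set fK : C(K, ℂ) := ContinuousMap.restrict K ⟨f, hf⟩ with hfK
  have hΨf : ∀ (y : A) (hy : IsStarNormal y) (hs : spectrum ℂ y ⊆ K),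
      Ψ y hy hs fK = cfc f y := by
    intro y hy hs
    rw [cfc_apply f y hy hf.continuousOn]
    show cfcHom hy (R := ℂ) _ = _
    congr 1
  have hfinal := hmain fK
  rw [hp] at hfinal
  simp only [hΨf] at hfinal
  -- conjugation identity
  have hconj : ∀ n, (U n : A) * cfc f a * star (U n : A) = cfc f (x n) := by
    intro n
    have := StarAlgHom.map_cfc (unitaryConjHom (U n)) f a hf.continuousOn
      (by show Continuous fun z : A => (U n : A) * z * star (U n : A); fun_prop)
      ha (hxnormal n)
    exact this
  refine ⟨U, ?_⟩
  have : Tendsto (fun n => cfc f (x n)) atTop (nhds (cfc f b)) := hfinal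
  rw [tendsto_iff_norm_sub_tendsto_zero] at this
  convert this using 2 with n
  rw [hconj n]
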